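/- The five-term relation for the dilogarithm: for x, y ∈ (0,1), Li₂(xy/((1−x)(1−y))) − Li₂(x/(1−y)) − Li₂(y/(1−x)) = −Li₂(x) − Li₂(y) − log(1−x)log(1−y), provided xy/((1−x)(1−y)) < 1. -/

import Mathlib

open Real

/-- The real dilogarithm `Li₂(x) = ∑_{k≥1} xᵏ/k²`. -/
noncomputable def Li2 (x : ℝ) : ℝ := ∑' n : ℕ, x ^ (n + 1) / ((n : ℝ) + 1) ^ 2

lemma Li2_zero : Li2 0 = 0 := by
  simp [Li2]

lemma hasDerivAt_Li2 {z : ℝ} (hz : |z| < 1) :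
    HasDerivAt Li2 (∑' n : ℕ, z ^ n / ((n : ℝ) + 1)) z := by
  set r : ℝ := (1 + |z|) / 2 with hr
  have h0z : 0 ≤ |z| := abs_nonneg z
  have hr0 : 0 < r := by positivity
  have hr1 : r < 1 := by simp only [hr]; linarith
  have hzr : |z| < r := by simp only [hr]; linarith
  have key : HasDerivAt (fun w : ℝ => ∑' n : ℕ, w ^ (n + 1) / ((n : ℝ) + 1) ^ 2)
      (∑' n : ℕ, z ^ n / ((n : ℝ) + 1)) z := by
    apply hasDerivAt_tsum_of_isPreconnected (u := fun n : ℕ => r ^ n)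
      (g := fun (n : ℕ) (w : ℝ) => w ^ (n + 1) / ((n : ℝ) + 1) ^ 2)
      (g' := fun (n : ℕ) (w : ℝ) => w ^ n / ((n : ℝ) + 1))
      (summable_geometric_of_lt_one hr0.le hr1) (Metric.isOpen_ball (x := (0:ℝ)) (ε := r))
      ((convex_ball (0:ℝ) r).isPreconnected) (y₀ := 0)
    · intro n w hw
      have hne : ((n : ℝ) + 1) ≠ 0 := by positivity
      have h1 : HasDerivAt (fun w : ℝ => w ^ (n + 1) / ((n : ℝ) + 1) ^ 2)
          (((n : ℕ) + 1 : ℕ) * w ^ n / ((n : ℝ) + 1) ^ 2) w :=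
        (hasDerivAt_pow (n + 1) w).div_const _
      refine h1.congr_deriv ?_
      symm
      push_cast
      field_simp
    · intro n w hw
      have hw' : |w| < r := by simpa [Real.dist_eq] using hw
      have : ‖w ^ n / ((n : ℝ) + 1)‖ ≤ |w| ^ n := by
        rw [norm_div, norm_pow]
        calc |w| ^ n / ‖((n : ℝ) + 1)‖ ≤ |w| ^ n / 1 := by
              apply div_le_div_of_nonneg_left (by positivity) one_pos
              rw [Real.norm_eq_abs, abs_of_nonneg (by positivity : (0:ℝ) ≤ (n:ℝ) + 1)]
              linarith [Nat.cast_nonneg (α := ℝ) n]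
          _ = |w| ^ n := by ring
      exact this.trans (pow_le_pow_left₀ (abs_nonneg w) hw'.le n)
    · simpa [Real.dist_eq] using hr0
    · simpa using summable_zero
    · simpa [Real.dist_eq] using hzr
  exact key

lemma tsum_aux_zero : (∑' n : ℕ, (0:ℝ) ^ n / ((n : ℝ) + 1)) = 1 := by
  rw [tsum_eq_single 0]
  · simp
  · intro n hn; simp [zero_pow hn]

lemma tsum_aux_pos {z : ℝ} (h0 : 0 < z) (h1 : z < 1) :
    (∑' n : ℕ, z ^ n / ((n : ℝ) + 1)) = -Real.log (1 - z) / z := by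
  have habs : |z| < 1 := by rw [abs_of_pos h0]; exact h1
  have h := (Real.hasSum_pow_div_log_of_abs_lt_one habs).div_const z
  have heq : (fun n : ℕ => z ^ (n + 1) / ((n : ℝ) + 1) / z) =
      fun n : ℕ => z ^ n / ((n : ℝ) + 1) := by
    funext n
    have hne : ((n : ℝ) + 1) ≠ 0 := by positivity
    rw [pow_succ]
    field_simp
  rw [heq] at h
  exact h.tsum_eq

/-- The five-term relation for the dilogarithm: for `x, y ∈ (0,1)` with `x + y < 1`,
`Li₂(xy/((1−x)(1−y))) − Li₂(x/(1−y)) − Li₂(y/(1−x))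
  = −Li₂(x) − Li₂(y) − log(1−x)·log(1−y)`. -/
theorem dilog_five_term (x y : ℝ) (hx0 : 0 < x) (hx1 : x < 1) (hy0 : 0 < y) (hy1 : y < 1)
    (hxy : x + y < 1) :
    Li2 (x * y / ((1 - x) * (1 - y))) - Li2 (x / (1 - y)) - Li2 (y / (1 - x)) =
      -Li2 x - Li2 y - Real.log (1 - x) * Real.log (1 - y) := by
  have hy1' : (0:ℝ) < 1 - y := by linarith
  set B : ℝ := Real.log (1 - y) with hB
  set H : ℝ → ℝ := fun t =>
    Li2 (t * y / ((1 - t) * (1 - y))) - Li2 (t / (1 - y)) - Li2 (y / (1 - t)) +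
      Li2 t + Li2 y + Real.log (1 - t) * B with hH
  have key : ∀ t ∈ Set.Icc (0:ℝ) x, HasDerivAt H 0 t := by
    rintro t ⟨ht0, htx⟩
    have hty : t + y < 1 := by linarith
    have ht1 : t < 1 := by linarith
    have h1t : (0:ℝ) < 1 - t := by linarith
    have h1ty : (0:ℝ) < 1 - t - y := by linarith
    -- bounds on the three arguments
    have ha0 : 0 ≤ t * y / ((1 - t) * (1 - y)) := by positivity
    have ha1 : t * y / ((1 - t) * (1 - y)) < 1 := by
      rw [div_lt_one (by positivity)]; nlinarith
    have hb0 : 0 ≤ t / (1 - y) := by positivity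
    have hb1 : t / (1 - y) < 1 := by rw [div_lt_one hy1']; linarith
    have hc0 : 0 < y / (1 - t) := by positivity
    have hc1 : y / (1 - t) < 1 := by rw [div_lt_one h1t]; linarith
    have haabs : |t * y / ((1 - t) * (1 - y))| < 1 := by rw [abs_of_nonneg ha0]; exact ha1
    have hbabs : |t / (1 - y)| < 1 := by rw [abs_of_nonneg hb0]; exact hb1
    have hcabs : |y / (1 - t)| < 1 := by rw [abs_of_nonneg hc0.le]; exact hc1
    have htabs : |t| < 1 := by rw [abs_of_nonneg ht0]; exact ht1
    -- inner derivatives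
    have hA : HasDerivAt (fun s : ℝ => s * y / ((1 - s) * (1 - y)))
        (y / ((1 - t) ^ 2 * (1 - y))) t := by
      have h1 : HasDerivAt (fun s : ℝ => s * y) y t := by
        simpa using (hasDerivAt_id t).mul_const y
      have h2 : HasDerivAt (fun s : ℝ => (1 - s) * (1 - y)) (-(1 - y)) t := by
        have := ((hasDerivAt_const t (1:ℝ)).sub (hasDerivAt_id t)).mul_const (1 - y)
        simpa using this
      have := h1.div h2 (by positivity)
      refine this.congr_deriv ?_
      symm
      field_simp
      ring
    have hBd : HasDerivAt (fun s : ℝ => s / (1 - y)) (1 / (1 - y)) t := by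
      simpa using (hasDerivAt_id t).div_const (1 - y)
    have hC : HasDerivAt (fun s : ℝ => y / (1 - s)) (y / (1 - t) ^ 2) t := by
      have h2 : HasDerivAt (fun s : ℝ => 1 - s) (-1) t := by
        simpa using (hasDerivAt_id t).const_sub (1:ℝ)
      have := (hasDerivAt_const t y).div h2 (ne_of_gt h1t)
      refine this.congr_deriv ?_
      symm
      field_simp
      ring
    have hlog : HasDerivAt (fun s : ℝ => Real.log (1 - s) * B) (-(1 / (1 - t)) * B) t := by
      have h2 : HasDerivAt (fun s : ℝ => 1 - s) (-1) t := by
        simpa using (hasDerivAt_id t).const_sub (1:ℝ)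
      have := ((Real.hasDerivAt_log (ne_of_gt h1t)).comp t h2).mul_const B
      refine this.congr_deriv ?_
      symm
      field_simp
    -- assemble
    have hLa := (hasDerivAt_Li2 haabs).comp t hA
    have hLb := (hasDerivAt_Li2 hbabs).comp t hBd
    have hLc := (hasDerivAt_Li2 hcabs).comp t hC
    have hLt := hasDerivAt_Li2 htabs
    have htot := ((((hLa.sub hLb).sub hLc).add hLt).add_const (Li2 y)).add hlog
    refine htot.congr_deriv ?_
    symm
    rcases eq_or_lt_of_le ht0 with h | h
    · -- t = 0
      subst h
      rw [show (0:ℝ) * y / ((1 - 0) * (1 - y)) = 0 by ring_nf, show (0:ℝ) / (1 - y) = 0 by ring,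
        show y / (1 - (0:ℝ)) = y by ring_nf]
      rw [tsum_aux_zero, tsum_aux_pos hy0 hy1]
      rw [← hB]
      field_simp
      ring
    · -- 0 < t
      have hta : 0 < t * y / ((1 - t) * (1 - y)) := by positivity
      have htb : 0 < t / (1 - y) := by positivity
      rw [tsum_aux_pos hta ha1, tsum_aux_pos htb hb1, tsum_aux_pos hc0 hc1,
        tsum_aux_pos h ht1]
      have e1 : 1 - t * y / ((1 - t) * (1 - y)) = (1 - t - y) / ((1 - t) * (1 - y)) := by
        field_simp; ring
      have e2 : 1 - t / (1 - y) = (1 - t - y) / (1 - y) := by field_simp; ring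
      have e3 : 1 - y / (1 - t) = (1 - t - y) / (1 - t) := by field_simp
      rw [e1, e2, e3, Real.log_div (by positivity) (by positivity),
        Real.log_div (by positivity) (by positivity),
        Real.log_div (by positivity) (by positivity),
        Real.log_mul (by positivity) (by positivity), ← hB]
      field_simp
      ring
  have hcont : ContinuousOn H (Set.Icc 0 x) := fun t ht =>
    (key t ht).continuousAt.continuousWithinAt
  have hderiv : ∀ t ∈ Set.Ico (0:ℝ) x, HasDerivWithinAt H 0 (Set.Ici t) t := fun t ht =>
    (key t ⟨ht.1, ht.2.le⟩).hasDerivWithinAt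
  have hconst := constant_of_has_deriv_right_zero hcont hderiv x ⟨hx0.le, le_refl x⟩
  have hH0 : H 0 = 0 := by
    simp only [hH]
    rw [show (0:ℝ) * y / ((1 - 0) * (1 - y)) = 0 by ring_nf, show (0:ℝ) / (1 - y) = 0 by ring,
      show y / (1 - (0:ℝ)) = y by ring_nf, Li2_zero]
    simp
  rw [hH0] at hconst
  simp only [hH] at hconst
  linarith [hconst]
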